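/- Let i be a state for which there exist d in {1,...,n} and an input j such that i is in the union of N_d^j and P_d^j and exactly one of the sets N_d^j, P_d^j is empty. Then i is sign strictly herdable: for every pair (A',B') with the same sign pattern as (A,B), state i is strictly herdable with respect to the controllability matrix of (A',B'). -/

import Mathlib

/-- `k` is a walk of length `e + 1` from input `j` to state `i`: it visits the states
`k 0, k 1, …, k e`, ends at `i`, starts along a nonzero entry of `B`, and follows
nonzero entries of `A`. -/
def IsWalk {n m : ℕ} (A : Matrix (Fin n) (Fin n) ℝ) (B : Matrix (Fin n) (Fin m) ℝ)
    (j : Fin m) (i : Fin n) {e : ℕ} (k : Fin (e + 1) → Fin n) : Prop :=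
  k (Fin.last e) = i ∧ B (k 0) j ≠ 0 ∧ ∀ t : Fin e, A (k t.succ) (k t.castSucc) ≠ 0

/-- The weight of the walk `k 0, …, k e` from input `j`:
`B (k 0) j * ∏ₜ A (k (t+1)) (k t)`. -/
def walkWeight {n m : ℕ} (A : Matrix (Fin n) (Fin n) ℝ) (B : Matrix (Fin n) (Fin m) ℝ)
    (j : Fin m) {e : ℕ} (k : Fin (e + 1) → Fin n) : ℝ :=
  B (k 0) j * ∏ t : Fin e, A (k t.succ) (k t.castSucc)

open Classical in
/-- `rho A B j i d` is the sum of the weights of all walks of length `d` from input `j`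
to state `i` (zero if there are none, in particular for `d = 0`). -/
noncomputable def rho {n m : ℕ} (A : Matrix (Fin n) (Fin n) ℝ) (B : Matrix (Fin n) (Fin m) ℝ)
    (j : Fin m) (i : Fin n) : ℕ → ℝ
  | 0 => 0
  | e + 1 => ∑ k : Fin (e + 1) → Fin n,
      if IsWalk A B j i k then walkWeight A B j k else 0

/-- `Pset A B j d` is the set of states reachable from input `j` by at least one walk of
length `d` of positive weight. -/
def Pset {n m : ℕ} (A : Matrix (Fin n) (Fin n) ℝ) (B : Matrix (Fin n) (Fin m) ℝ)
    (j : Fin m) : ℕ → Set (Fin n)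
  | 0 => ∅
  | e + 1 => {i | ∃ k : Fin (e + 1) → Fin n, IsWalk A B j i k ∧ 0 < walkWeight A B j k}

/-- `Nset A B j d` is the set of states reachable from input `j` by at least one walk of
length `d` of negative weight. -/
def Nset {n m : ℕ} (A : Matrix (Fin n) (Fin n) ℝ) (B : Matrix (Fin n) (Fin m) ℝ)
    (j : Fin m) : ℕ → Set (Fin n)
  | 0 => ∅
  | e + 1 => {i | ∃ k : Fin (e + 1) → Fin n, IsWalk A B j i k ∧ walkWeight A B j k < 0}

/-- The controllability matrix `C = [B, AB, …, A^{n-1} B]`; the column indexed by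
`(d, j)` is the `j`-th column of `A^d B`. -/
def ctrb {n m : ℕ} (A : Matrix (Fin n) (Fin n) ℝ) (B : Matrix (Fin n) (Fin m) ℝ) :
    Matrix (Fin n) (Fin n × Fin m) ℝ := fun i p => (A ^ (p.1 : ℕ) * B) i p.2

/-- A vector is unisigned if all of its nonzero entries have the same sign. -/
def Unisigned {n : ℕ} (k : Fin n → ℝ) : Prop :=
  ∀ a b : Fin n, k a ≠ 0 → k b ≠ 0 → Real.sign (k a) = Real.sign (k b)

/-- State `i` is strictly herdable with respect to the pair `(A, B)`: there is a
unisigned vector `k` in the range of the controllability matrix with `k i ≠ 0`. -/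
def StrictlyHerdable {n m : ℕ} (A : Matrix (Fin n) (Fin n) ℝ)
    (B : Matrix (Fin n) (Fin m) ℝ) (i : Fin n) : Prop :=
  ∃ k : Fin n → ℝ, (∃ y : Fin n × Fin m → ℝ, (ctrb A B).mulVec y = k) ∧
    Unisigned k ∧ k i ≠ 0

/-- `(A', B')` has the same sign pattern as `(A, B)`. -/
def SamePattern {n m : ℕ} (A A' : Matrix (Fin n) (Fin n) ℝ)
    (B B' : Matrix (Fin n) (Fin m) ℝ) : Prop :=
  (∀ p q, Real.sign (A' p q) = Real.sign (A p q)) ∧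
    (∀ p q, Real.sign (B' p q) = Real.sign (B p q))

section Aux

private lemma real_sign_mul' (x y : ℝ) : Real.sign (x * y) = Real.sign x * Real.sign y := by
  rcases lt_trichotomy x 0 with hx | hx | hx
  · rcases lt_trichotomy y 0 with hy | hy | hy
    · rw [Real.sign_of_pos (mul_pos_of_neg_of_neg hx hy), Real.sign_of_neg hx,
        Real.sign_of_neg hy]; ring
    · subst hy; simp
    · rw [Real.sign_of_neg (mul_neg_of_neg_of_pos hx hy), Real.sign_of_neg hx,
        Real.sign_of_pos hy]; ring
  · subst hx; simp
  · rcases lt_trichotomy y 0 with hy | hy | hy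
    · rw [Real.sign_of_neg (mul_neg_of_pos_of_neg hx hy), Real.sign_of_pos hx,
        Real.sign_of_neg hy]; ring
    · subst hy; simp
    · rw [Real.sign_of_pos (mul_pos hx hy), Real.sign_of_pos hx, Real.sign_of_pos hy]; ring

private lemma real_sign_prod {ι : Type*} (s : Finset ι) (f : ι → ℝ) :
    Real.sign (∏ t ∈ s, f t) = ∏ t ∈ s, Real.sign (f t) := by
  induction s using Finset.cons_induction with
  | empty => simp [Real.sign_one]
  | cons a s ha ih => rw [Finset.prod_cons, Finset.prod_cons, real_sign_mul', ih]

private lemma pos_of_sign_eq {x y : ℝ} (h : Real.sign x = Real.sign y) (hx : 0 < x) : 0 < y := by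
  rcases lt_trichotomy y 0 with hy | hy | hy
  · rw [Real.sign_of_pos hx, Real.sign_of_neg hy] at h; norm_num at h
  · rw [Real.sign_of_pos hx, hy, Real.sign_zero] at h; norm_num at h
  · exact hy

private lemma neg_of_sign_eq {x y : ℝ} (h : Real.sign x = Real.sign y) (hx : x < 0) : y < 0 := by
  rcases lt_trichotomy y 0 with hy | hy | hy
  · exact hy
  · rw [Real.sign_of_neg hx, hy, Real.sign_zero] at h; norm_num at h
  · rw [Real.sign_of_neg hx, Real.sign_of_pos hy] at h; norm_num at h

private lemma ne_of_sign_eq {x y : ℝ} (h : Real.sign x = Real.sign y) (hx : x ≠ 0) : y ≠ 0 := by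
  intro h0
  subst h0
  rw [Real.sign_zero] at h
  exact hx (Real.sign_eq_zero_iff.mp h)

variable {n m : ℕ} {A A' : Matrix (Fin n) (Fin n) ℝ} {B B' : Matrix (Fin n) (Fin m) ℝ}

private lemma sign_walkWeight (hA : ∀ p q, Real.sign (A' p q) = Real.sign (A p q))
    (hB : ∀ p q, Real.sign (B' p q) = Real.sign (B p q)) (j : Fin m) {e : ℕ}
    (k : Fin (e + 1) → Fin n) :
    Real.sign (walkWeight A' B' j k) = Real.sign (walkWeight A B j k) := by
  unfold walkWeight
  rw [real_sign_mul', real_sign_mul', real_sign_prod, real_sign_prod, hB]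
  congr 1
  exact Finset.prod_congr rfl fun t _ => hA _ _

private lemma isWalk_of_samePattern (hA : ∀ p q, Real.sign (A' p q) = Real.sign (A p q))
    (hB : ∀ p q, Real.sign (B' p q) = Real.sign (B p q)) {j : Fin m} {i : Fin n} {e : ℕ}
    {k : Fin (e + 1) → Fin n} (hw : IsWalk A B j i k) : IsWalk A' B' j i k := by
  obtain ⟨h1, h2, h3⟩ := hw
  exact ⟨h1, ne_of_sign_eq (hB _ _).symm h2, fun t => ne_of_sign_eq (hA _ _).symm (h3 t)⟩

private lemma walkWeight_ne_zero {j : Fin m} {i : Fin n} {e : ℕ} {k : Fin (e + 1) → Fin n}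
    (hw : IsWalk A B j i k) : walkWeight A B j k ≠ 0 := by
  obtain ⟨-, h2, h3⟩ := hw
  exact mul_ne_zero h2 (Finset.prod_ne_zero_iff.mpr fun t _ => h3 t)

private lemma walkWeight_snoc (j : Fin m) {e : ℕ} (k' : Fin (e + 1) → Fin n) (x : Fin n) :
    walkWeight A B j (Fin.snoc k' x) = A x (k' (Fin.last e)) * walkWeight A B j k' := by
  unfold walkWeight
  rw [Fin.prod_univ_castSucc]
  simp only [Fin.succ_castSucc, Fin.snoc_castSucc, Fin.succ_last, Fin.snoc_last,
    ← Fin.castSucc_zero (n := e + 1)]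
  ring

private lemma isWalk_snoc {j : Fin m} {i : Fin n} {e : ℕ} (k' : Fin (e + 1) → Fin n)
    (x : Fin n) :
    IsWalk A B j i (Fin.snoc k' x) ↔
      x = i ∧ A x (k' (Fin.last e)) ≠ 0 ∧ IsWalk A B j (k' (Fin.last e)) k' := by
  unfold IsWalk
  constructor
  · rintro ⟨h1, h2, h3⟩
    rw [Fin.snoc_last] at h1
    refine ⟨h1, ?_, rfl, ?_, fun s => ?_⟩
    · have := h3 (Fin.last e)
      rwa [Fin.succ_last, Fin.snoc_last, Fin.snoc_castSucc] at this
    · rwa [show ((0 : Fin (e + 2))) = Fin.castSucc 0 from rfl, Fin.snoc_castSucc] at h2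
    · have := h3 s.castSucc
      rwa [Fin.succ_castSucc, Fin.snoc_castSucc, Fin.snoc_castSucc] at this
  · rintro ⟨hx, hA0, -, h2, h3⟩
    refine ⟨by rw [Fin.snoc_last]; exact hx, ?_, fun t => ?_⟩
    · rwa [show ((0 : Fin (e + 2))) = Fin.castSucc 0 from rfl, Fin.snoc_castSucc]
    · induction t using Fin.lastCases with
      | last => rw [Fin.succ_last, Fin.snoc_last, Fin.snoc_castSucc]; rw [hx]; exact hx ▸ hA0
      | cast s => rw [Fin.succ_castSucc, Fin.snoc_castSucc, Fin.snoc_castSucc]; exact h3 s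

private def snocEquiv (n e : ℕ) : ((Fin (e + 1) → Fin n) × Fin n) ≃ (Fin (e + 2) → Fin n) where
  toFun p := Fin.snoc p.1 p.2
  invFun k := (Fin.init k, k (Fin.last (e + 1)))
  left_inv p := by simp [Fin.init_snoc, Fin.snoc_last]
  right_inv k := by simp [Fin.snoc_init_self]

private lemma rho_succ (A : Matrix (Fin n) (Fin n) ℝ) (B : Matrix (Fin n) (Fin m) ℝ)
    (j : Fin m) (e : ℕ) (i : Fin n) :
    rho A B j i (e + 2) = ∑ x : Fin n, A i x * rho A B j x (e + 1) := by
  classical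
  rw [rho, ← Equiv.sum_comp (snocEquiv n e)]
  rw [Fintype.sum_prod_type]
  simp only [show ∀ (k' : Fin (e + 1) → Fin n) (x : Fin n), snocEquiv n e (k', x) = Fin.snoc k' x
    from fun _ _ => rfl]
  have hterm : ∀ (k' : Fin (e + 1) → Fin n) (x : Fin n),
      (if IsWalk A B j i (Fin.snoc k' x) then walkWeight A B j (Fin.snoc k' x) else 0)
        = if x = i then A i (k' (Fin.last e)) *
            (if IsWalk A B j (k' (Fin.last e)) k' then walkWeight A B j k' else 0) else 0 := by
    intro k' x
    by_cases hx : x = i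
    · subst hx
      by_cases hA0 : A x (k' (Fin.last e)) = 0
      · rw [if_pos rfl, hA0, zero_mul, if_neg]
        intro hw
        exact ((isWalk_snoc k' x).mp hw).2.1 hA0
      · by_cases hw : IsWalk A B j (k' (Fin.last e)) k'
        · rw [if_pos ((isWalk_snoc k' x).mpr ⟨rfl, hA0, hw⟩), if_pos rfl, if_pos hw,
            walkWeight_snoc]
        · rw [if_neg, if_pos rfl, if_neg hw, mul_zero]
          intro hcon
          exact hw ((isWalk_snoc k' x).mp hcon).2.2
    · rw [if_neg hx, if_neg]
      intro hw
      exact hx ((isWalk_snoc k' x).mp hw).1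
  have lhs_eq : ∀ k' : Fin (e + 1) → Fin n,
      (∑ x : Fin n, if IsWalk A B j i (Fin.snoc k' x) then walkWeight A B j (Fin.snoc k' x) else 0)
        = A i (k' (Fin.last e)) *
            (if IsWalk A B j (k' (Fin.last e)) k' then walkWeight A B j k' else 0) := by
    intro k'
    have : ∀ x : Fin n, (if IsWalk A B j i (Fin.snoc k' x) then walkWeight A B j (Fin.snoc k' x) else 0)
        = if x = i then A i (k' (Fin.last e)) *
            (if IsWalk A B j (k' (Fin.last e)) k' then walkWeight A B j k' else 0) else 0 :=
      fun x => hterm k' x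
    rw [Finset.sum_congr rfl fun x _ => this x, Finset.sum_ite_eq' Finset.univ i]
    rw [if_pos (Finset.mem_univ i)]
  rw [Finset.sum_congr rfl fun k' _ => lhs_eq k']
  -- now: ∑ k', A i (k' last) * ite ... = ∑ x, A i x * rho A B j x (e+1)
  have rhs_eq : ∀ x : Fin n, A i x * rho A B j x (e + 1)
      = ∑ k' : Fin (e + 1) → Fin n,
          if IsWalk A B j x k' then A i x * walkWeight A B j k' else 0 := by
    intro x
    rw [rho, Finset.mul_sum]
    exact Finset.sum_congr rfl fun k' _ => by rw [mul_ite, mul_zero]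
  rw [Finset.sum_congr rfl fun x _ => rhs_eq x, Finset.sum_comm]
  refine Finset.sum_congr rfl fun k' _ => ?_
  rw [Finset.sum_eq_single (k' (Fin.last e))]
  · by_cases hw : IsWalk A B j (k' (Fin.last e)) k' <;> simp [hw]
  · intro x _ hx
    rw [if_neg]
    intro hw
    exact hx hw.1.symm
  · intro habs
    exact absurd (Finset.mem_univ _) habs

private lemma rho_eq (A : Matrix (Fin n) (Fin n) ℝ) (B : Matrix (Fin n) (Fin m) ℝ)
    (j : Fin m) : ∀ (e : ℕ) (i : Fin n), rho A B j i (e + 1) = (A ^ e * B) i j := by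
  intro e
  induction e with
  | zero =>
    intro i
    classical
    rw [rho, ← Equiv.sum_comp (Equiv.funUnique (Fin 1) (Fin n)).symm]
    have hterm : ∀ x : Fin n,
        (if IsWalk A B j i ((Equiv.funUnique (Fin 1) (Fin n)).symm x)
          then walkWeight A B j ((Equiv.funUnique (Fin 1) (Fin n)).symm x) else 0)
        = if x = i then B x j else 0 := by
      intro x
      have hc : ((Equiv.funUnique (Fin 1) (Fin n)).symm x : Fin 1 → Fin n) = fun _ => x := rfl
      rw [hc]
      by_cases hx : x = i
      · subst hx
        by_cases hb : B x j = 0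
        · rw [if_pos rfl, hb, if_neg]
          rintro ⟨-, h2, -⟩
          exact h2 hb
        · rw [if_pos ⟨rfl, hb, fun t => t.elim0⟩, if_pos rfl]
          simp [walkWeight]
      · rw [if_neg hx, if_neg]
        rintro ⟨h1, -, -⟩
        exact hx h1
    rw [Finset.sum_congr rfl fun x _ => hterm x, Finset.sum_ite_eq' Finset.univ i,
      if_pos (Finset.mem_univ i), pow_zero, Matrix.one_mul]
  | succ e ih =>
    intro i
    rw [rho_succ, pow_succ', Matrix.mul_assoc, Matrix.mul_apply]
    exact Finset.sum_congr rfl fun x _ => by rw [ih x]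

end Aux

/-- If for state `i` there are `d ∈ {1,…,n}` and an input `j` such that
`i ∈ N_d^j ∪ P_d^j` and exactly one of `N_d^j`, `P_d^j` is empty, then `i` is sign
strictly herdable: it is strictly herdable for every pair with the same sign pattern. -/
theorem signStrictlyHerdable_of_unisigned_walks {n m : ℕ}
    (A : Matrix (Fin n) (Fin n) ℝ) (B : Matrix (Fin n) (Fin m) ℝ) (i : Fin n)
    (h : ∃ (d : ℕ) (j : Fin m), 1 ≤ d ∧ d ≤ n ∧ i ∈ Nset A B j d ∪ Pset A B j d ∧
      Xor' (Nset A B j d = ∅) (Pset A B j d = ∅)) :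
    ∀ (A' : Matrix (Fin n) (Fin n) ℝ) (B' : Matrix (Fin n) (Fin m) ℝ),
      SamePattern A A' B B' → StrictlyHerdable A' B' i := by
  classical
  obtain ⟨d, j, hd1, hdn, hmem, hxor⟩ := h
  intro A' B' hpat
  obtain ⟨hA, hB⟩ := hpat
  obtain ⟨e, rfl⟩ : ∃ e, d = e + 1 := ⟨d - 1, (Nat.succ_pred_eq_of_pos hd1).symm⟩
  have hen : e < n := Nat.lt_of_lt_of_le (Nat.lt_succ_self e) hdn
  have hsign : ∀ (k : Fin (e + 1) → Fin n),
      Real.sign (walkWeight A' B' j k) = Real.sign (walkWeight A B j k) :=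
    fun k => sign_walkWeight hA hB j k
  have hrange : ∀ c : ℝ, ∃ y : Fin n × Fin m → ℝ,
      (ctrb A' B').mulVec y = fun i' => c * (A' ^ e * B') i' j := by
    intro c
    refine ⟨fun p => if p = (⟨e, hen⟩, j) then c else 0, ?_⟩
    funext i'
    rw [Matrix.mulVec, dotProduct]
    rw [Finset.sum_eq_single ((⟨e, hen⟩ : Fin n), j)]
    · rw [if_pos rfl]
      simp [ctrb, mul_comm]
    · intro p _ hp
      rw [if_neg hp, mul_zero]
    · intro habs
      exact absurd (Finset.mem_univ _) habs
  have hval : ∀ (c : ℝ) (i' : Fin n), c * (A' ^ e * B') i' j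
      = c * ∑ k : Fin (e + 1) → Fin n,
          (if IsWalk A' B' j i' k then walkWeight A' B' j k else 0) := by
    intro c i'
    rw [← rho_eq A' B' j e i', rho]
  have hback : ∀ {i' : Fin n} {k : Fin (e + 1) → Fin n}, IsWalk A' B' j i' k →
      IsWalk A B j i' k :=
    fun hw => isWalk_of_samePattern (fun p q => (hA p q).symm) (fun p q => (hB p q).symm) hw
  rcases hxor with ⟨hN, -⟩ | ⟨hP, -⟩
  · -- Nset empty: every walk has positive weight
    have hiP : i ∈ Pset A B j (e + 1) := by
      rcases hmem with hmi | hmi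
      · rw [hN] at hmi
        exact absurd hmi (Set.notMem_empty i)
      · exact hmi
    obtain ⟨k0, hk0w, hk0pos⟩ := hiP
    have hallpos : ∀ (i' : Fin n) (k : Fin (e + 1) → Fin n), IsWalk A' B' j i' k →
        0 < walkWeight A' B' j k := by
      intro i' k hw
      have hwAB : IsWalk A B j i' k := hback hw
      rcases lt_trichotomy (walkWeight A B j k) 0 with hlt | h0 | hgt
      · exact absurd (show i' ∈ (∅ : Set (Fin n)) by rw [← hN]; exact ⟨k, hwAB, hlt⟩) (Set.notMem_empty i')
      · exact absurd h0 (walkWeight_ne_zero hwAB)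
      · exact pos_of_sign_eq (hsign k).symm hgt
    have hnonneg : ∀ i' : Fin n, 0 ≤ (1 : ℝ) * (A' ^ e * B') i' j := by
      intro i'
      rw [hval, one_mul]
      refine Finset.sum_nonneg fun k _ => ?_
      by_cases hw : IsWalk A' B' j i' k
      · rw [if_pos hw]; exact (hallpos i' k hw).le
      · rw [if_neg hw]
    have hposi : 0 < (1 : ℝ) * (A' ^ e * B') i j := by
      rw [hval, one_mul]
      have hk0w' : IsWalk A' B' j i k0 := isWalk_of_samePattern hA hB hk0w
      refine Finset.sum_pos' (fun k _ => ?_) ⟨k0, Finset.mem_univ _, ?_⟩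
      · by_cases hw : IsWalk A' B' j i k
        · rw [if_pos hw]; exact (hallpos i k hw).le
        · rw [if_neg hw]
      · rw [if_pos hk0w']
        exact hallpos i k0 hk0w'
    obtain ⟨y, hy⟩ := hrange 1
    refine ⟨_, ⟨y, hy⟩, ?_, ?_⟩
    · intro a b ha hb
      rw [Real.sign_of_pos (lt_of_le_of_ne (hnonneg a) (Ne.symm ha)),
        Real.sign_of_pos (lt_of_le_of_ne (hnonneg b) (Ne.symm hb))]
    · exact hposi.ne'
  · -- Pset empty: every walk has negative weight
    have hiN : i ∈ Nset A B j (e + 1) := by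
      rcases hmem with hmi | hmi
      · exact hmi
      · rw [hP] at hmi
        exact absurd hmi (Set.notMem_empty i)
    obtain ⟨k0, hk0w, hk0neg⟩ := hiN
    have hallneg : ∀ (i' : Fin n) (k : Fin (e + 1) → Fin n), IsWalk A' B' j i' k →
        walkWeight A' B' j k < 0 := by
      intro i' k hw
      have hwAB : IsWalk A B j i' k := hback hw
      rcases lt_trichotomy (walkWeight A B j k) 0 with hlt | h0 | hgt
      · exact neg_of_sign_eq (hsign k).symm hlt
      · exact absurd h0 (walkWeight_ne_zero hwAB)
      · exact absurd (show i' ∈ (∅ : Set (Fin n)) by rw [← hP]; exact ⟨k, hwAB, hgt⟩) (Set.notMem_empty i')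
    have hterm_nonpos : ∀ (i' : Fin n) (k : Fin (e + 1) → Fin n),
        (if IsWalk A' B' j i' k then walkWeight A' B' j k else 0) ≤ 0 := by
      intro i' k
      by_cases hw : IsWalk A' B' j i' k
      · rw [if_pos hw]; exact (hallneg i' k hw).le
      · rw [if_neg hw]
    have hnonneg : ∀ i' : Fin n, 0 ≤ (-1 : ℝ) * (A' ^ e * B') i' j := by
      intro i'
      rw [hval]
      have hs : (∑ k : Fin (e + 1) → Fin n,
          (if IsWalk A' B' j i' k then walkWeight A' B' j k else 0)) ≤ 0 :=
        Finset.sum_nonpos fun k _ => hterm_nonpos i' k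
      nlinarith [hs]
    have hposi : 0 < (-1 : ℝ) * (A' ^ e * B') i j := by
      rw [hval]
      have hk0w' : IsWalk A' B' j i k0 := isWalk_of_samePattern hA hB hk0w
      have h2 : (∑ k : Fin (e + 1) → Fin n,
          (if IsWalk A' B' j i k then walkWeight A' B' j k else 0))
          < ∑ _k : Fin (e + 1) → Fin n, (0 : ℝ) := by
        refine Finset.sum_lt_sum (fun k _ => hterm_nonpos i k) ⟨k0, Finset.mem_univ _, ?_⟩
        rw [if_pos hk0w']
        exact hallneg i k0 hk0w'
      rw [Finset.sum_const, smul_zero] at h2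
      nlinarith [h2]
    obtain ⟨y, hy⟩ := hrange (-1)
    refine ⟨_, ⟨y, hy⟩, ?_, ?_⟩
    · intro a b ha hb
      rw [Real.sign_of_pos (lt_of_le_of_ne (hnonneg a) (Ne.symm ha)),
        Real.sign_of_pos (lt_of_le_of_ne (hnonneg b) (Ne.symm hb))]
    · exact hposi.ne'
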